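/- Fix c > 1 and let Aut(g_c) = { [[β-α, -cα, x],[α, β+α, y],[0,0,1]] : α,β,x,y ∈ R, β²+(c-1)α² ≠ 0 }. For μ,μ'>0 and τ,τ' < 1, the matrices M = [[1,1,0],[1,τ,0],[0,0,μ]] and M' = [[1,1,0],[1,τ',0],[0,0,μ']] are Aut(g_c)-congruent (i.e., B^t M B = M' for some B ∈ Aut(g_c)) if and only if μ = μ' and τ = τ'. -/
import Mathlib


open Matrix

/-- Membership in `Aut(g_c)`. -/
def InAutGc (c : ℝ) (B : Matrix (Fin 3) (Fin 3) ℝ) : Prop :=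
  ∃ α β x y : ℝ, β ^ 2 + (c - 1) * α ^ 2 ≠ 0 ∧
    B = !![β - α, -(c * α), x; α, β + α, y; 0, 0, 1]

theorem stmt_12 (c μ μ' τ τ' : ℝ) (hc : 1 < c) (hμ : 0 < μ) (hμ' : 0 < μ')
    (hτ : τ < 1) (hτ' : τ' < 1) :
    (∃ B, InAutGc c B ∧
        Bᵀ * !![1, 1, 0; 1, τ, 0; 0, 0, μ] * B = !![1, 1, 0; 1, τ', 0; 0, 0, μ'])
      ↔ (μ = μ' ∧ τ = τ') := by
  constructor
  · rintro ⟨B, ⟨α, β, x, y, hne, rfl⟩, hBM⟩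
    have e00 := congrFun (congrFun hBM 0) 0
    have e01 := congrFun (congrFun hBM 0) 1
    have e11 := congrFun (congrFun hBM 1) 1
    have e02 := congrFun (congrFun hBM 0) 2
    have e12 := congrFun (congrFun hBM 1) 2
    have e22 := congrFun (congrFun hBM 2) 2
    simp [Matrix.mul_apply, Fin.sum_univ_succ, Matrix.transpose_apply] at e00 e01 e11 e02 e12 e22
    have h1 : (τ - c) * (α * β) = 0 := by linear_combination e01 - e00
    have hαβ : α * β = 0 := by
      have hτc : τ - c ≠ 0 := by linarith
      exact (mul_eq_zero.1 h1).resolve_left hτc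
    rcases mul_eq_zero.1 hαβ with hα | hβ
    · subst hα
      have hβ2 : β ^ 2 = 1 := by nlinarith [e00]
      have hττ' : τ = τ' := by nlinarith [e11]
      have hxy1 : β * (x + y) = 0 := by linear_combination e02
      have hxy2 : β * (x + τ * y) = 0 := by linear_combination e12
      have hβne : β ≠ 0 := by intro h; rw [h] at hβ2; norm_num at hβ2
      have h1 : x + y = 0 := by
        rcases mul_eq_zero.1 hxy1 with h | h
        · exact absurd h hβne
        · exact h
      have h2 : x + τ * y = 0 := by
        rcases mul_eq_zero.1 hxy2 with h | h
        · exact absurd h hβne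
        · exact h
      have hy : y = 0 := by
        have : (1 - τ) * y = 0 := by linarith
        have hτ1 : 1 - τ ≠ 0 := by linarith
        exact (mul_eq_zero.1 this).resolve_left hτ1
      have hx : x = 0 := by linarith [h1, hy]
      subst hy hx
      refine ⟨?_, hττ'⟩
      nlinarith [e22]
    · subst hβ
      exfalso
      nlinarith [e00, sq_nonneg α]
  · rintro ⟨rfl, rfl⟩
    refine ⟨1, ⟨0, 1, 0, 0, by norm_num, ?_⟩, by simp⟩
    rw [show (1 : Matrix (Fin 3) (Fin 3) ℝ) = !![1,0,0;0,1,0;0,0,1] by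
      ext i j; fin_cases i <;> fin_cases j <;> simp [Matrix.one_apply, Matrix.vecHead, Matrix.vecTail]]
    norm_num
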